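/- arXiv:1810.01120 — 3 statements merged into one kernel-verified Lean document; each statement's English description precedes it below -/
import Mathlib

section
/- Let L be an e-cyclic residuated lattice and let P ≠ L be a prime convex subalgebra of L. Then the following are equivalent: (1) P is a minimal prime convex subalgebra of L; (2) L⁻ \ P is a maximal ideal of the lattice (L⁻, ∨, ∧); (3) P ∩ L⁻ is a minimal prime filter of the lattice (L⁻, ∨, ∧). -/
universe u

/-- A residuated lattice: a lattice-ordered monoid with left and right residuals.
`ldiv x z` is `x \ z` and `rdiv z y` is `z / y`. -/
class ResiduatedLattice (α : Type u) extends Lattice α, Monoid α where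
  ldiv : α → α → α
  rdiv : α → α → α
  mul_le_iff_le_ldiv : ∀ x y z : α, x * y ≤ z ↔ y ≤ ldiv x z
  mul_le_iff_le_rdiv : ∀ x y z : α, x * y ≤ z ↔ x ≤ rdiv z y

namespace ResiduatedLattice

variable {α : Type u} [ResiduatedLattice α]

/-- `L` is e-cyclic if `x \ e = e / x` for all `x`. -/
def ECyclic (α : Type u) [ResiduatedLattice α] : Prop :=
  ∀ x : α, ldiv x 1 = rdiv 1 x

/-- Absolute value: `|x| = x ⊓ (e / x) ⊓ e`. -/
def absv (x : α) : α := x ⊓ rdiv 1 x ⊓ 1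

/-- A convex subalgebra: contains `e`, closed under all the operations, and order-convex. -/
structure IsConvexSubalgebra (H : Set α) : Prop where
  one_mem : (1 : α) ∈ H
  mul_mem : ∀ ⦃x⦄, x ∈ H → ∀ ⦃y⦄, y ∈ H → x * y ∈ H
  sup_mem : ∀ ⦃x⦄, x ∈ H → ∀ ⦃y⦄, y ∈ H → x ⊔ y ∈ H
  inf_mem : ∀ ⦃x⦄, x ∈ H → ∀ ⦃y⦄, y ∈ H → x ⊓ y ∈ H
  ldiv_mem : ∀ ⦃x⦄, x ∈ H → ∀ ⦃y⦄, y ∈ H → ldiv x y ∈ H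
  rdiv_mem : ∀ ⦃x⦄, x ∈ H → ∀ ⦃y⦄, y ∈ H → rdiv x y ∈ H
  convex : ∀ ⦃a⦄, a ∈ H → ∀ ⦃b⦄, b ∈ H → ∀ ⦃x⦄, a ≤ x → x ≤ b → x ∈ H

/-- `C[S]`: the smallest convex subalgebra containing `S`. -/
def convexClosure (S : Set α) : Set α :=
  ⋂₀ {H : Set α | IsConvexSubalgebra H ∧ S ⊆ H}

end ResiduatedLattice

open ResiduatedLattice

/-- A prime convex subalgebra: a convex subalgebra that is meet-irreducible in the
lattice of convex subalgebras. -/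
def IsPrimeConvex {α : Type u} [ResiduatedLattice α] (H : Set α) : Prop :=
  IsConvexSubalgebra H ∧
  ∀ X Y : Set α, IsConvexSubalgebra X → IsConvexSubalgebra Y →
    X ∩ Y ⊆ H → X ⊆ H ∨ Y ⊆ H

/-- A minimal prime convex subalgebra. -/
def IsMinimalPrimeConvex {α : Type u} [ResiduatedLattice α] (P : Set α) : Prop :=
  IsPrimeConvex P ∧ P ≠ Set.univ ∧
  ∀ Q : Set α, IsPrimeConvex Q → Q ≠ Set.univ → Q ⊆ P → Q = P

/-- The negative cone `L⁻ = {x : x ≤ e}`. -/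
def negCone (α : Type u) [ResiduatedLattice α] : Set α := {x : α | x ≤ 1}

/-- An ideal of the lattice `(L⁻, ⊔, ⊓)`. -/
def IsLatIdeal {α : Type u} [ResiduatedLattice α] (I : Set α) : Prop :=
  I.Nonempty ∧ I ⊆ negCone α ∧
  (∀ x ∈ I, ∀ y ∈ negCone α, y ≤ x → y ∈ I) ∧
  ∀ x ∈ I, ∀ y ∈ I, x ⊔ y ∈ I

/-- A maximal ideal of the lattice `(L⁻, ⊔, ⊓)`. -/
def IsMaximalLatIdeal {α : Type u} [ResiduatedLattice α] (I : Set α) : Prop :=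
  IsLatIdeal I ∧ I ≠ negCone α ∧
  ∀ J : Set α, IsLatIdeal J → J ≠ negCone α → I ⊆ J → J = I

/-- A filter of the lattice `(L⁻, ⊔, ⊓)`. -/
def IsLatFilter {α : Type u} [ResiduatedLattice α] (F : Set α) : Prop :=
  F.Nonempty ∧ F ⊆ negCone α ∧
  (∀ x ∈ F, ∀ y ∈ negCone α, x ≤ y → y ∈ F) ∧
  ∀ x ∈ F, ∀ y ∈ F, x ⊓ y ∈ F

/-- A prime filter of the lattice `(L⁻, ⊔, ⊓)`. -/
def IsPrimeLatFilter {α : Type u} [ResiduatedLattice α] (F : Set α) : Prop :=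
  IsLatFilter F ∧ F ≠ negCone α ∧
  ∀ x ∈ negCone α, ∀ y ∈ negCone α, x ⊔ y ∈ F → x ∈ F ∨ y ∈ F

/-- A minimal prime filter of the lattice `(L⁻, ⊔, ⊓)`. -/
def IsMinimalPrimeLatFilter {α : Type u} [ResiduatedLattice α] (F : Set α) : Prop :=
  IsPrimeLatFilter F ∧ ∀ G : Set α, IsPrimeLatFilter G → G ⊆ F → G = F

namespace Stmt15Aux

open ResiduatedLattice

variable {α : Type u} [ResiduatedLattice α]

lemma le_ldiv_iff {x y z : α} : x * y ≤ z ↔ y ≤ ldiv x z := mul_le_iff_le_ldiv x y z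

lemma le_rdiv_iff {x y z : α} : x * y ≤ z ↔ x ≤ rdiv z y := mul_le_iff_le_rdiv x y z

lemma mul_le_mul_left'' {a b : α} (h : a ≤ b) (c : α) : c * a ≤ c * b :=
  le_ldiv_iff.mpr (h.trans (le_ldiv_iff.mp le_rfl))

lemma mul_le_mul_right'' {a b : α} (h : a ≤ b) (c : α) : a * c ≤ b * c :=
  le_rdiv_iff.mpr (h.trans (le_rdiv_iff.mp le_rfl))

lemma mul_le_mul'' {a b c d : α} (h1 : a ≤ b) (h2 : c ≤ d) : a * c ≤ b * d :=
  (mul_le_mul_left'' h2 a).trans (mul_le_mul_right'' h1 d)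

lemma mul_le_one'' {a b : α} (h1 : a ≤ 1) (h2 : b ≤ 1) : a * b ≤ 1 := by
  simpa using mul_le_mul'' h1 h2

lemma mul_sup'' (a b c : α) : a * (b ⊔ c) = a * b ⊔ a * c :=
  le_antisymm
    (le_ldiv_iff.mpr (sup_le (le_ldiv_iff.mp le_sup_left) (le_ldiv_iff.mp le_sup_right)))
    (sup_le (mul_le_mul_left'' le_sup_left a) (mul_le_mul_left'' le_sup_right a))

lemma sup_mul'' (a b c : α) : (a ⊔ b) * c = a * c ⊔ b * c :=
  le_antisymm
    (le_rdiv_iff.mpr (sup_le (le_rdiv_iff.mp le_sup_left) (le_rdiv_iff.mp le_sup_right)))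
    (sup_le (mul_le_mul_right'' le_sup_left c) (mul_le_mul_right'' le_sup_right c))

lemma rdiv_mul_le (x : α) : rdiv 1 x * x ≤ 1 := le_rdiv_iff.mpr le_rfl

lemma mul_ldiv_le (x y : α) : x * ldiv x y ≤ y := le_ldiv_iff.mpr le_rfl

lemma rdiv_mul_le' (x y : α) : rdiv x y * y ≤ x := le_rdiv_iff.mpr le_rfl

lemma absv_le_self (x : α) : absv x ≤ x := inf_le_left.trans inf_le_left

lemma absv_le_rdiv (x : α) : absv x ≤ rdiv 1 x := inf_le_left.trans inf_le_right

lemma absv_le_one (x : α) : absv x ≤ 1 := inf_le_right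

lemma absv_mul_self_le (x : α) : absv x * x ≤ 1 :=
  (mul_le_mul_right'' (absv_le_rdiv x) x).trans (rdiv_mul_le x)

lemma self_mul_absv_le (hec : ECyclic α) (x : α) : x * absv x ≤ 1 :=
  le_ldiv_iff.mpr (by rw [hec x]; exact absv_le_rdiv x)

lemma le_rdiv_one_absv (hec : ECyclic α) (x : α) : x ≤ rdiv 1 (absv x) :=
  le_rdiv_iff.mp (self_mul_absv_le hec x)

lemma one_le_rdiv_of_le_one {x : α} (h : x ≤ 1) : (1 : α) ≤ rdiv 1 x :=
  le_rdiv_iff.mp (by simpa using h)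

lemma absv_of_le_one {x : α} (h : x ≤ 1) : absv x = x :=
  le_antisymm (absv_le_self x)
    (le_inf (le_inf le_rfl (h.trans (one_le_rdiv_of_le_one h))) h)

lemma absv_one : absv (1 : α) = 1 := absv_of_le_one le_rfl

lemma rdiv_le_rdiv'' {x y : α} (h : x ≤ y) : rdiv 1 y ≤ rdiv 1 x :=
  le_rdiv_iff.mp ((mul_le_mul_left'' h _).trans (rdiv_mul_le y))

lemma rdiv_one_sup (x y : α) : rdiv 1 x ⊓ rdiv 1 y ≤ rdiv 1 (x ⊔ y) := by
  refine le_rdiv_iff.mp ?_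
  rw [mul_sup'']
  exact sup_le ((mul_le_mul_right'' inf_le_left x).trans (rdiv_mul_le x))
    ((mul_le_mul_right'' inf_le_right y).trans (rdiv_mul_le y))

lemma absv_inf_le_absv_sup (x y : α) : absv x ⊓ absv y ≤ absv (x ⊔ y) := by
  refine le_inf (le_inf ?_ ?_) (inf_le_left.trans (absv_le_one x))
  · exact inf_le_left.trans ((absv_le_self x).trans le_sup_left)
  · exact (inf_le_inf (absv_le_rdiv x) (absv_le_rdiv y)).trans (rdiv_one_sup x y)

lemma absv_inf_le_absv_inf (x y : α) : absv x ⊓ absv y ≤ absv (x ⊓ y) := by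
  refine le_inf (le_inf ?_ ?_) (inf_le_left.trans (absv_le_one x))
  · exact inf_le_inf (absv_le_self x) (absv_le_self y)
  · exact inf_le_left.trans ((absv_le_rdiv x).trans (rdiv_le_rdiv'' inf_le_left))

lemma absv_convex {a b x : α} (ha : a ≤ x) (hb : x ≤ b) : absv a ⊓ absv b ≤ absv x := by
  refine le_inf (le_inf ?_ ?_) (inf_le_left.trans (absv_le_one a))
  · exact inf_le_left.trans ((absv_le_self a).trans ha)
  · exact inf_le_right.trans ((absv_le_rdiv b).trans (rdiv_le_rdiv'' hb))

/-- Key bound for products: `(|x||y|)(|y||x|) ≤ |xy|`. -/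
lemma absv_mul_bound (hec : ECyclic α) (x y : α) :
    absv x * absv y * (absv y * absv x) ≤ absv (x * y) := by
  set u := absv x with hu
  set v := absv y with hv
  have hu1 : u ≤ 1 := absv_le_one x
  have hv1 : v ≤ 1 := absv_le_one y
  have huv1 : u * v ≤ 1 := mul_le_one'' hu1 hv1
  have hvu1 : v * u ≤ 1 := mul_le_one'' hv1 hu1
  refine le_inf (le_inf ?_ ?_) (mul_le_one'' huv1 hvu1)
  · calc u * v * (v * u) ≤ u * v * 1 := mul_le_mul_left'' hvu1 _
      _ = u * v := mul_one _
      _ ≤ x * y := mul_le_mul'' (absv_le_self x) (absv_le_self y)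
  · -- (uv)(vu) ≤ vu ≤ 1/(xy), since (xy)(vu) ≤ 1 and e-cyclic
    have h1 : x * y * (v * u) ≤ 1 := by
      have : x * y * (v * u) = x * (y * v) * u := by
        simp [mul_assoc]
      rw [this]
      calc x * (y * v) * u ≤ x * 1 * u :=
            mul_le_mul_right'' (mul_le_mul_left'' (self_mul_absv_le hec y) x) u
        _ = x * u := by rw [mul_one]
        _ ≤ 1 := self_mul_absv_le hec x
    have h2 : v * u ≤ rdiv 1 (x * y) := by
      rw [← hec (x * y)]; exact le_ldiv_iff.mp h1
    calc u * v * (v * u) ≤ 1 * (v * u) := mul_le_mul_right'' huv1 _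
      _ = v * u := one_mul _
      _ ≤ rdiv 1 (x * y) := h2

/-- Key bound for left residuals: `(|x||y|)(|y||x|) ≤ |x\y|`. -/
lemma absv_ldiv_bound (hec : ECyclic α) (x y : α) :
    absv x * absv y * (absv y * absv x) ≤ absv (ldiv x y) := by
  set u := absv x with hu
  set v := absv y with hv
  have hu1 : u ≤ 1 := absv_le_one x
  have hv1 : v ≤ 1 := absv_le_one y
  have huv1 : u * v ≤ 1 := mul_le_one'' hu1 hv1
  have hvu1 : v * u ≤ 1 := mul_le_one'' hv1 hu1
  set r := ldiv x y with hr
  refine le_inf (le_inf ?_ ?_) (mul_le_one'' huv1 hvu1)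
  · -- uv ≤ r since x(uv) ≤ y
    have : x * (u * v) ≤ y := by
      have h1 : x * (u * v) = x * u * v := (mul_assoc _ _ _).symm
      rw [h1]
      calc x * u * v ≤ 1 * v := mul_le_mul_right'' (self_mul_absv_le hec x) v
        _ = v := one_mul v
        _ ≤ y := absv_le_self y
    calc u * v * (v * u) ≤ u * v * 1 := mul_le_mul_left'' hvu1 _
      _ = u * v := mul_one _
      _ ≤ r := le_ldiv_iff.mp this
  · -- vu ≤ 1/r since r(vu) ≤ 1
    have hrv : r * v ≤ rdiv 1 x := by
      rw [← hec x]
      refine le_ldiv_iff.mp ?_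
      have : x * (r * v) = x * r * v := (mul_assoc _ _ _).symm
      rw [this]
      calc x * r * v ≤ y * v := mul_le_mul_right'' (mul_ldiv_le x y) v
        _ ≤ 1 := self_mul_absv_le hec y
    have h1 : r * (v * u) ≤ 1 := by
      have : r * (v * u) = r * v * u := (mul_assoc _ _ _).symm
      rw [this]
      calc r * v * u ≤ rdiv 1 x * x := mul_le_mul'' hrv (absv_le_self x)
        _ ≤ 1 := rdiv_mul_le x
    have h2 : v * u ≤ rdiv 1 r := by
      rw [← hec r]; exact le_ldiv_iff.mp h1
    calc u * v * (v * u) ≤ 1 * (v * u) := mul_le_mul_right'' huv1 _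
      _ = v * u := one_mul _
      _ ≤ rdiv 1 r := h2

/-- Key bound for right residuals: `(|x||y|)(|y||x|) ≤ |x/y|`. -/
lemma absv_rdiv_bound (hec : ECyclic α) (x y : α) :
    absv x * absv y * (absv y * absv x) ≤ absv (rdiv x y) := by
  set u := absv x with hu
  set v := absv y with hv
  have hu1 : u ≤ 1 := absv_le_one x
  have hv1 : v ≤ 1 := absv_le_one y
  have huv1 : u * v ≤ 1 := mul_le_one'' hu1 hv1
  have hvu1 : v * u ≤ 1 := mul_le_one'' hv1 hu1
  set r := rdiv x y with hr
  refine le_inf (le_inf ?_ ?_) (mul_le_one'' huv1 hvu1)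
  · -- uv ≤ r since (uv)y ≤ x
    have : u * v * y ≤ x := by
      rw [mul_assoc]
      calc u * (v * y) ≤ u * 1 := mul_le_mul_left'' (absv_mul_self_le y) u
        _ = u := mul_one u
        _ ≤ x := absv_le_self x
    calc u * v * (v * u) ≤ u * v * 1 := mul_le_mul_left'' hvu1 _
      _ = u * v := mul_one _
      _ ≤ r := le_rdiv_iff.mp this
  · -- vu ≤ 1/r since r(vu) ≤ 1
    have h1 : r * (v * u) ≤ 1 := by
      have : r * (v * u) = r * v * u := (mul_assoc _ _ _).symm
      rw [this]
      have hrv : r * v ≤ x := by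
        calc r * v ≤ r * y := mul_le_mul_left'' (absv_le_self y) r
          _ ≤ x := rdiv_mul_le' x y
      calc r * v * u ≤ x * u := mul_le_mul_right'' hrv u
        _ ≤ 1 := self_mul_absv_le hec x
    have h2 : v * u ≤ rdiv 1 r := by
      rw [← hec r]; exact le_ldiv_iff.mp h1
    calc u * v * (v * u) ≤ 1 * (v * u) := mul_le_mul_right'' huv1 _
      _ = v * u := one_mul _
      _ ≤ rdiv 1 r := h2

lemma absv_mem {H : Set α} (hH : IsConvexSubalgebra H) {x : α} (hx : x ∈ H) : absv x ∈ H :=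
  hH.inf_mem (hH.inf_mem hx (hH.rdiv_mem hH.one_mem hx)) hH.one_mem

lemma mem_of_absv_mem (hec : ECyclic α) {H : Set α} (hH : IsConvexSubalgebra H) {x : α}
    (h : absv x ∈ H) : x ∈ H :=
  hH.convex h (hH.rdiv_mem hH.one_mem h) (absv_le_self x) (le_rdiv_one_absv hec x)

lemma pow_le_one'' {a : α} (h : a ≤ 1) : ∀ n, a ^ n ≤ 1
  | 0 => by simp
  | n + 1 => by
      rw [pow_succ]
      exact mul_le_one'' (pow_le_one'' h n) h

lemma one_le_pow'' {a : α} (h : 1 ≤ a) : ∀ n, (1 : α) ≤ a ^ n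
  | 0 => by simp
  | n + 1 => by
      rw [pow_succ]
      calc (1 : α) = 1 * 1 := (one_mul 1).symm
        _ ≤ a ^ n * a := mul_le_mul'' (one_le_pow'' h n) h

lemma pow_add_le_left {a : α} (h : a ≤ 1) (m n : ℕ) : a ^ (m + n) ≤ a ^ m := by
  rw [pow_add]
  calc a ^ m * a ^ n ≤ a ^ m * 1 := mul_le_mul_left'' (pow_le_one'' h n) _
    _ = a ^ m := mul_one _

lemma pow_add_le_right {a : α} (h : a ≤ 1) (m n : ℕ) : a ^ (m + n) ≤ a ^ n := by
  rw [pow_add]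
  calc a ^ m * a ^ n ≤ 1 * a ^ n := mul_le_mul_right'' (pow_le_one'' h m) _
    _ = a ^ n := one_mul _

lemma pow_mem {H : Set α} (hH : IsConvexSubalgebra H) {a : α} (ha : a ∈ H) :
    ∀ n, a ^ n ∈ H
  | 0 => by simpa using hH.one_mem
  | n + 1 => by
      rw [pow_succ]
      exact hH.mul_mem (pow_mem hH ha n) ha

/-- The key combinatorial inequality: `(a ⊔ b)^(m+n) ≤ a^m ⊔ b^n` for negative `a, b`. -/
lemma sup_pow_le {a b : α} (ha : a ≤ 1) (hb : b ≤ 1) :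
    ∀ m n : ℕ, (a ⊔ b) ^ (m + n) ≤ a ^ m ⊔ b ^ n := by
  have hab : a ⊔ b ≤ 1 := sup_le ha hb
  intro m
  induction m with
  | zero =>
    intro n
    rw [Nat.zero_add]
    refine (pow_le_one'' hab n).trans ?_
    rw [pow_zero]
    exact le_sup_left
  | succ m ih =>
    intro n
    induction n with
    | zero =>
      rw [Nat.add_zero]
      refine (pow_le_one'' hab (m + 1)).trans ?_
      rw [pow_zero]
      exact le_sup_right
    | succ n ihn =>
      have e1 : m + 1 + (n + 1) = (m + 1 + n) + 1 := by omega
      have e2 : m + 1 + n = m + (n + 1) := by omega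
      rw [e1, pow_succ, mul_sup'']
      have t1 : (a ⊔ b) ^ (m + 1 + n) ≤ a ^ m ⊔ b ^ (n + 1) := by rw [e2]; exact ih (n + 1)
      have t2 : (a ⊔ b) ^ (m + 1 + n) ≤ a ^ (m + 1) ⊔ b ^ n := ihn
      refine sup_le ?_ ?_
      · calc (a ⊔ b) ^ (m + 1 + n) * a ≤ (a ^ m ⊔ b ^ (n + 1)) * a := mul_le_mul_right'' t1 a
          _ = a ^ m * a ⊔ b ^ (n + 1) * a := sup_mul'' _ _ _
          _ ≤ a ^ (m + 1) ⊔ b ^ (n + 1) := by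
              refine sup_le (le_sup_left.trans_eq' (pow_succ a m)) (le_sup_of_le_right ?_)
              calc b ^ (n + 1) * a ≤ b ^ (n + 1) * 1 := mul_le_mul_left'' ha _
                _ = b ^ (n + 1) := mul_one _
      · calc (a ⊔ b) ^ (m + 1 + n) * b ≤ (a ^ (m + 1) ⊔ b ^ n) * b := mul_le_mul_right'' t2 b
          _ = a ^ (m + 1) * b ⊔ b ^ n * b := sup_mul'' _ _ _
          _ ≤ a ^ (m + 1) ⊔ b ^ (n + 1) := by
              refine sup_le (le_sup_of_le_left ?_) (le_sup_right.trans_eq' (pow_succ b n))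
              calc a ^ (m + 1) * b ≤ a ^ (m + 1) * 1 := mul_le_mul_left'' hb _
                _ = a ^ (m + 1) := mul_one _

/-- The principal convex subalgebra generated by a negative element, described by powers. -/
def Cgen (a : α) : Set α := {x | ∃ n : ℕ, a ^ n ≤ absv x}

lemma Cgen_convex (hec : ECyclic α) {a : α} (ha : a ≤ 1) : IsConvexSubalgebra (Cgen a) := by
  have key : ∀ x ∈ Cgen a, ∀ y ∈ Cgen a, ∀ z : α,
      absv x * absv y * (absv y * absv x) ≤ absv z → z ∈ Cgen a := by
    rintro x ⟨m, hm⟩ y ⟨n, hn⟩ z hz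
    refine ⟨m + n + (n + m), ?_⟩
    rw [pow_add, pow_add, pow_add]
    exact le_trans (mul_le_mul'' (mul_le_mul'' hm hn) (mul_le_mul'' hn hm)) hz
  have infkey : ∀ x ∈ Cgen a, ∀ y ∈ Cgen a, ∀ z : α,
      absv x ⊓ absv y ≤ absv z → z ∈ Cgen a := by
    rintro x ⟨m, hm⟩ y ⟨n, hn⟩ z hz
    exact ⟨m + n, le_trans (le_inf ((pow_add_le_left ha m n).trans hm)
      ((pow_add_le_right ha m n).trans hn)) hz⟩
  refine ⟨⟨0, by simp [absv_one]⟩, ?_, ?_, ?_, ?_, ?_, ?_⟩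
  · exact fun x hx y hy => key x hx y hy _ (absv_mul_bound hec x y)
  · exact fun x hx y hy => infkey x hx y hy _ (absv_inf_le_absv_sup x y)
  · exact fun x hx y hy => infkey x hx y hy _ (absv_inf_le_absv_inf x y)
  · exact fun x hx y hy => key x hx y hy _ (absv_ldiv_bound hec x y)
  · exact fun x hx y hy => key x hx y hy _ (absv_rdiv_bound hec x y)
  · exact fun u hu v hv x h1 h2 => infkey u hu v hv x (absv_convex h1 h2)

lemma self_mem_Cgen {a : α} (ha : a ≤ 1) : a ∈ Cgen a :=
  ⟨1, by rw [pow_one, absv_of_le_one ha]⟩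

lemma Cgen_subset (hec : ECyclic α) {H : Set α} (hH : IsConvexSubalgebra H) {a : α}
    (haH : a ∈ H) : Cgen a ⊆ H := by
  rintro x ⟨n, hn⟩
  exact mem_of_absv_mem hec hH
    (hH.convex (pow_mem hH haH n) hH.one_mem hn (absv_le_one x))

/-- Prime convex subalgebras meet the negative cone in prime lattice filters. -/
lemma prime_transfer (hec : ECyclic α) {P : Set α} (hP : IsPrimeConvex P) {a b : α}
    (ha : a ≤ 1) (hb : b ≤ 1) (hab : a ⊔ b ∈ P) : a ∈ P ∨ b ∈ P := by
  have hsub : Cgen a ∩ Cgen b ⊆ P := by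
    rintro x ⟨⟨m, hm⟩, ⟨n, hn⟩⟩
    exact Cgen_subset hec hP.1 hab ⟨m + n, (sup_pow_le ha hb m n).trans (sup_le hm hn)⟩
  rcases hP.2 _ _ (Cgen_convex hec ha) (Cgen_convex hec hb) hsub with h | h
  · exact Or.inl (h (self_mem_Cgen ha))
  · exact Or.inr (h (self_mem_Cgen hb))

lemma eq_univ_of_negCone_subset (hec : ECyclic α) {H : Set α} (hH : IsConvexSubalgebra H)
    (h : negCone α ⊆ H) : H = Set.univ := by
  ext x
  simp only [Set.mem_univ, iff_true]
  exact mem_of_absv_mem hec hH (h (absv_le_one x))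

end Stmt15Aux

namespace Stmt15Aux

open ResiduatedLattice

variable {α : Type u} [ResiduatedLattice α]

lemma one_mem_negCone : (1 : α) ∈ negCone α := le_rfl

lemma exists_maximal_lat_ideal {J : Set α} (hJ : IsLatIdeal J) (h1 : (1 : α) ∉ J) :
    ∃ M : Set α, IsLatIdeal M ∧ (1 : α) ∉ M ∧ J ⊆ M ∧
      ∀ K : Set α, IsLatIdeal K → (1 : α) ∉ K → M ⊆ K → K = M := by
  have hub : ∀ c ⊆ {K : Set α | IsLatIdeal K ∧ (1 : α) ∉ K}, IsChain (· ⊆ ·) c →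
      c.Nonempty → ∃ ub ∈ {K : Set α | IsLatIdeal K ∧ (1 : α) ∉ K}, ∀ s ∈ c, s ⊆ ub := by
    intro c hcS hchain hcne
    obtain ⟨s0, hs0⟩ := hcne
    refine ⟨⋃₀ c, ⟨⟨?_, ?_, ?_, ?_⟩, ?_⟩, fun s hs => Set.subset_sUnion_of_mem hs⟩
    · obtain ⟨x, hx⟩ := (hcS hs0).1.1
      exact ⟨x, s0, hs0, hx⟩
    · rintro x ⟨s, hs, hx⟩
      exact (hcS hs).1.2.1 hx
    · rintro x ⟨s, hs, hx⟩ y hy hyx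
      exact ⟨s, hs, (hcS hs).1.2.2.1 x hx y hy hyx⟩
    · rintro x ⟨s, hs, hx⟩ y ⟨t, ht, hy⟩
      rcases hchain.total hs ht with h | h
      · exact ⟨t, ht, (hcS ht).1.2.2.2 x (h hx) y hy⟩
      · exact ⟨s, hs, (hcS hs).1.2.2.2 x hx y (h hy)⟩
    · rintro ⟨s, hs, h1s⟩
      exact (hcS hs).2 h1s
  obtain ⟨M, hJM, hMmax⟩ :=
    zorn_subset_nonempty {K : Set α | IsLatIdeal K ∧ (1 : α) ∉ K} hub J ⟨hJ, h1⟩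
  exact ⟨M, hMmax.prop.1, hMmax.prop.2, hJM,
    fun K hK h1K hMK => Set.Subset.antisymm (hMmax.2 ⟨hK, h1K⟩ hMK) hMK⟩

lemma maximal_ideal_key {M : Set α} (hM : IsLatIdeal M) (h1 : (1 : α) ∉ M)
    (hmax : ∀ K : Set α, IsLatIdeal K → (1 : α) ∉ K → M ⊆ K → K = M)
    {w : α} (hw : w ≤ 1) (hwM : w ∉ M) : ∃ j ∈ M, (1 : α) ≤ j ⊔ w := by
  by_contra hcon
  push_neg at hcon
  obtain ⟨j₀, hj₀⟩ := hM.1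
  set K : Set α := {z | z ≤ 1 ∧ ∃ j ∈ M, z ≤ j ⊔ w} with hK
  have hKideal : IsLatIdeal K := by
    refine ⟨⟨j₀, hM.2.1 hj₀, j₀, hj₀, le_sup_left⟩, fun z hz => hz.1, ?_, ?_⟩
    · rintro x ⟨hx1, j, hj, hxj⟩ y hy hyx
      exact ⟨hy, j, hj, hyx.trans hxj⟩
    · rintro x ⟨hx1, j, hj, hxj⟩ y ⟨hy1, k, hk, hyk⟩
      exact ⟨sup_le hx1 hy1, j ⊔ k, hM.2.2.2 j hj k hk,
        sup_le (hxj.trans (sup_le_sup_right le_sup_left w))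
          (hyk.trans (sup_le_sup_right le_sup_right w))⟩
  have h1K : (1 : α) ∉ K := by
    rintro ⟨-, j, hj, hj1⟩
    exact hcon j hj hj1
  have hMK : M ⊆ K := fun z hz => ⟨hM.2.1 hz, z, hz, le_sup_left⟩
  have hKM := hmax K hKideal h1K hMK
  exact hwM (hKM ▸ (⟨hw, j₀, hj₀, le_sup_right⟩ : w ∈ K))

lemma maximal_ideal_mul {M : Set α} (hM : IsLatIdeal M) (h1 : (1 : α) ∉ M)
    (hmax : ∀ K : Set α, IsLatIdeal K → (1 : α) ∉ K → M ⊆ K → K = M)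
    {u v : α} (hu : u ≤ 1) (hv : v ≤ 1) (hu' : u ∉ M) (hv' : v ∉ M) : u * v ∉ M := by
  obtain ⟨j₁, hj₁, h₁⟩ := maximal_ideal_key hM h1 hmax hu hu'
  obtain ⟨j₂, hj₂, h₂⟩ := maximal_ideal_key hM h1 hmax hv hv'
  intro huv
  have hj₂1 : j₂ ≤ 1 := hM.2.1 hj₂
  have expand : (j₁ ⊔ u) * (j₂ ⊔ v) ≤ (j₁ ⊔ j₂) ⊔ u * v := by
    rw [sup_mul'', mul_sup'', mul_sup'']
    refine sup_le (sup_le ?_ ?_) (sup_le ?_ ?_)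
    · exact le_sup_of_le_left (le_sup_of_le_left
        (by simpa using mul_le_mul_left'' hj₂1 j₁))
    · exact le_sup_of_le_left (le_sup_of_le_left
        (by simpa using mul_le_mul_left'' hv j₁))
    · exact le_sup_of_le_left (le_sup_of_le_right
        (by simpa using mul_le_mul_right'' hu j₂))
    · exact le_sup_right
  have hone : (1 : α) ≤ (j₁ ⊔ j₂) ⊔ u * v :=
    calc (1 : α) = 1 * 1 := (one_mul 1).symm
      _ ≤ (j₁ ⊔ u) * (j₂ ⊔ v) := mul_le_mul'' h₁ h₂
      _ ≤ _ := expand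
  have hmem : (j₁ ⊔ j₂) ⊔ u * v ∈ M := hM.2.2.2 _ (hM.2.2.2 _ hj₁ _ hj₂) _ huv
  exact h1 (hM.2.2.1 _ hmem 1 one_mem_negCone hone)

/-- The complement construction: if `M` is a "multiplicatively prime" lattice ideal of the
negative cone, then `{x : |x| ∉ M}` is a prime convex subalgebra. -/
lemma prime_convex_of_M (hec : ECyclic α) {M : Set α} (hM : IsLatIdeal M) (h1 : (1 : α) ∉ M)
    (hmul : ∀ u v : α, u ≤ 1 → v ≤ 1 → u ∉ M → v ∉ M → u * v ∉ M) :
    IsPrimeConvex {x : α | absv x ∉ M} := by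
  have hup : ∀ s t : α, s ≤ t → t ≤ 1 → s ∉ M → t ∉ M := fun s t hst ht hs htM =>
    hs (hM.2.2.1 t htM s (hst.trans ht) hst)
  have key : ∀ x ∈ {x : α | absv x ∉ M}, ∀ y ∈ {x : α | absv x ∉ M}, ∀ z : α,
      absv x * absv y * (absv y * absv x) ≤ absv z → z ∈ {x : α | absv x ∉ M} := by
    intro x hx y hy z hz
    have h1' : absv x * absv y ∉ M := hmul _ _ (absv_le_one x) (absv_le_one y) hx hy
    have h2' : absv y * absv x ∉ M := hmul _ _ (absv_le_one y) (absv_le_one x) hy hx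
    have h3' : absv x * absv y * (absv y * absv x) ∉ M :=
      hmul _ _ (mul_le_one'' (absv_le_one x) (absv_le_one y))
        (mul_le_one'' (absv_le_one y) (absv_le_one x)) h1' h2'
    exact hup _ _ hz (absv_le_one z) h3'
  have infkey : ∀ x ∈ {x : α | absv x ∉ M}, ∀ y ∈ {x : α | absv x ∉ M}, ∀ z : α,
      absv x ⊓ absv y ≤ absv z → z ∈ {x : α | absv x ∉ M} := by
    intro x hx y hy z hz
    have h1' : absv x * absv y ∉ M := hmul _ _ (absv_le_one x) (absv_le_one y) hx hy
    have hle : absv x * absv y ≤ absv x ⊓ absv y :=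
      le_inf (by simpa using mul_le_mul_left'' (absv_le_one y) (absv x))
        (by simpa using mul_le_mul_right'' (absv_le_one x) (absv y))
    have h2' : absv x ⊓ absv y ∉ M := hup _ _ hle (inf_le_left.trans (absv_le_one x)) h1'
    exact hup _ _ hz (absv_le_one z) h2'
  have hQconv : IsConvexSubalgebra {x : α | absv x ∉ M} := by
    refine ⟨?_, fun x hx y hy => key x hx y hy _ (absv_mul_bound hec x y),
      fun x hx y hy => infkey x hx y hy _ (absv_inf_le_absv_sup x y),
      fun x hx y hy => infkey x hx y hy _ (absv_inf_le_absv_inf x y),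
      fun x hx y hy => key x hx y hy _ (absv_ldiv_bound hec x y),
      fun x hx y hy => key x hx y hy _ (absv_rdiv_bound hec x y),
      fun a ha b hb x h1' h2' => infkey a ha b hb x (absv_convex h1' h2')⟩
    show absv (1 : α) ∉ M
    rw [absv_one]
    exact h1
  refine ⟨hQconv, ?_⟩
  intro X Y hX hY hXY
  by_contra hcon
  push_neg at hcon
  obtain ⟨x, hxX, hxQ⟩ := Set.not_subset.mp hcon.1
  obtain ⟨y, hyY, hyQ⟩ := Set.not_subset.mp hcon.2
  simp only [Set.mem_setOf_eq, not_not] at hxQ hyQ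
  have hsM : absv x ⊔ absv y ∈ M := hM.2.2.2 _ hxQ _ hyQ
  have hs1 : absv x ⊔ absv y ≤ 1 := sup_le (absv_le_one x) (absv_le_one y)
  have hsX : absv x ⊔ absv y ∈ X := hX.convex (absv_mem hX hxX) hX.one_mem le_sup_left hs1
  have hsY : absv x ⊔ absv y ∈ Y :=
    hY.convex (absv_mem hY hyY) hY.one_mem le_sup_right hs1
  have hsQ := hXY ⟨hsX, hsY⟩
  rw [Set.mem_setOf_eq, absv_of_le_one hs1] at hsQ
  exact hsQ hsM

end Stmt15Aux

open Stmt15Aux in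

/-- a proper prime convex subalgebra is minimal prime iff `L⁻ \ P` is a
maximal lattice ideal of `L⁻` iff `P ∩ L⁻` is a minimal prime lattice filter of `L⁻`. -/
theorem stmt15 {α : Type u} [ResiduatedLattice α] (hec : ECyclic α)
    (P : Set α) (hP : IsPrimeConvex P) (hP' : P ≠ Set.univ) :
    List.TFAE [
      IsMinimalPrimeConvex P,
      IsMaximalLatIdeal (negCone α \ P),
      IsMinimalPrimeLatFilter (P ∩ negCone α)] := by
  have hP1 := hP.1
  have h1P : (1 : α) ∈ P := hP1.one_mem
  have hIne : ∃ i : α, i ≤ 1 ∧ i ∉ P := by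
    by_contra hcon
    push_neg at hcon
    exact hP' (eq_univ_of_negCone_subset hec hP1 fun n hn => hcon n hn)
  have hIdown : ∀ x ∈ negCone α \ P, ∀ y ∈ negCone α, y ≤ x → y ∈ negCone α \ P := by
    rintro x ⟨hx1, hxP⟩ y hy1 hyx
    exact ⟨hy1, fun hyP => hxP (hP1.convex hyP h1P hyx hx1)⟩
  tfae_have 1 → 2 := by
    rintro ⟨-, -, hmin⟩
    have hIideal : IsLatIdeal (negCone α \ P) := by
      obtain ⟨i, hi1, hiP⟩ := hIne
      refine ⟨⟨i, hi1, hiP⟩, fun x hx => hx.1, hIdown, ?_⟩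
      rintro x ⟨hx1, hxP⟩ y ⟨hy1, hyP⟩
      refine ⟨sup_le hx1 hy1, fun hsP => ?_⟩
      rcases prime_transfer hec hP hx1 hy1 hsP with h | h
      exacts [hxP h, hyP h]
    refine ⟨hIideal, ?_, ?_⟩
    · intro hEq
      have h1I : (1 : α) ∈ negCone α \ P := by rw [hEq]; exact one_mem_negCone
      exact h1I.2 h1P
    · intro J hJ hJN hIJ
      refine Set.Subset.antisymm ?_ hIJ
      by_contra hcon
      obtain ⟨z, hzJ, hzI⟩ := Set.not_subset.mp hcon
      have hz1 : z ≤ 1 := hJ.2.1 hzJ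
      have hzP : z ∈ P := by
        by_contra h
        exact hzI ⟨hz1, h⟩
      have h1J : (1 : α) ∉ J := fun h =>
        hJN (Set.Subset.antisymm hJ.2.1 fun n hn => hJ.2.2.1 1 h n hn hn)
      obtain ⟨M, hM, h1M, hJM, hmax⟩ := exists_maximal_lat_ideal hJ h1J
      have hQ : IsPrimeConvex {x : α | absv x ∉ M} :=
        prime_convex_of_M hec hM h1M fun u v hu hv hu' hv' =>
          maximal_ideal_mul hM h1M hmax hu hv hu' hv'
      have hQP : {x : α | absv x ∉ M} ⊆ P := by
        intro x hx
        have haxP : absv x ∈ P := by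
          by_contra habs
          exact hx (hJM (hIJ ⟨absv_le_one x, habs⟩))
        exact mem_of_absv_mem hec hP1 haxP
      have hQuniv : {x : α | absv x ∉ M} ≠ Set.univ := by
        intro hEq
        have hzQ : z ∈ {x : α | absv x ∉ M} := by rw [hEq]; exact Set.mem_univ z
        rw [Set.mem_setOf_eq, absv_of_le_one hz1] at hzQ
        exact hzQ (hJM hzJ)
      have hQeq := hmin _ hQ hQuniv hQP
      have hzQ : z ∈ {x : α | absv x ∉ M} := by rw [hQeq]; exact hzP
      rw [Set.mem_setOf_eq, absv_of_le_one hz1] at hzQ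
      exact hzQ (hJM hzJ)
  tfae_have 2 → 3 := by
    rintro ⟨hI, hIN, hImax⟩
    have hFfilter : IsLatFilter (P ∩ negCone α) := by
      refine ⟨⟨1, h1P, one_mem_negCone⟩, fun x hx => hx.2, ?_, ?_⟩
      · rintro x ⟨hxP, hx1⟩ y hy1 hxy
        exact ⟨hP1.convex hxP h1P hxy hy1, hy1⟩
      · rintro x ⟨hxP, hx1⟩ y ⟨hyP, hy1⟩
        exact ⟨hP1.inf_mem hxP hyP, inf_le_left.trans hx1⟩
    have hFprime : IsPrimeLatFilter (P ∩ negCone α) := by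
      refine ⟨hFfilter, ?_, ?_⟩
      · intro hEq
        obtain ⟨i, hiN, hiP⟩ := hI.1
        have hiF : i ∈ P ∩ negCone α := by rw [hEq]; exact hiN
        exact hiP hiF.1
      · intro x hx1 y hy1 hxy
        by_contra hcon
        push_neg at hcon
        have hxI : x ∈ negCone α \ P := ⟨hx1, fun h => hcon.1 ⟨h, hx1⟩⟩
        have hyI : y ∈ negCone α \ P := ⟨hy1, fun h => hcon.2 ⟨h, hy1⟩⟩
        exact (hI.2.2.2 x hxI y hyI).2 hxy.1
    refine ⟨hFprime, ?_⟩
    intro G hG hGF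
    have h1G : (1 : α) ∈ G := by
      obtain ⟨g, hg⟩ := hG.1.1
      exact hG.1.2.2.1 g hg 1 one_mem_negCone (hG.1.2.1 hg)
    have hKideal : IsLatIdeal (negCone α \ G) := by
      refine ⟨?_, fun x hx => hx.1, ?_, ?_⟩
      · have hns : ¬ negCone α ⊆ G := fun h => hG.2.1 (Set.Subset.antisymm hG.1.2.1 h)
        obtain ⟨n, hnN, hnG⟩ := Set.not_subset.mp hns
        exact ⟨n, hnN, hnG⟩
      · rintro x ⟨hx1, hxG⟩ y hy1 hyx
        exact ⟨hy1, fun hyG => hxG (hG.1.2.2.1 y hyG x hx1 hyx)⟩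
      · rintro x ⟨hx1, hxG⟩ y ⟨hy1, hyG⟩
        refine ⟨sup_le hx1 hy1, fun hsG => ?_⟩
        rcases hG.2.2 x hx1 y hy1 hsG with h | h
        exacts [hxG h, hyG h]
    have hIK : negCone α \ P ⊆ negCone α \ G := by
      rintro i ⟨hi1, hiP⟩
      exact ⟨hi1, fun hiG => hiP (hGF hiG).1⟩
    have hKN : negCone α \ G ≠ negCone α := by
      intro hEq
      have h1K : (1 : α) ∈ negCone α \ G := by rw [hEq]; exact one_mem_negCone
      exact h1K.2 h1G
    have hKeq := hImax _ hKideal hKN hIK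
    refine Set.Subset.antisymm hGF ?_
    rintro x ⟨hxP, hx1⟩
    by_contra hxG
    have hxK : x ∈ negCone α \ G := ⟨hx1, hxG⟩
    rw [hKeq] at hxK
    exact hxK.2 hxP
  tfae_have 3 → 2 := by
    rintro ⟨hFprime, hFmin⟩
    have hIideal : IsLatIdeal (negCone α \ P) := by
      obtain ⟨i, hi1, hiP⟩ := hIne
      refine ⟨⟨i, hi1, hiP⟩, fun x hx => hx.1, hIdown, ?_⟩
      rintro x ⟨hx1, hxP⟩ y ⟨hy1, hyP⟩
      refine ⟨sup_le hx1 hy1, fun hsP => ?_⟩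
      rcases hFprime.2.2 x hx1 y hy1 ⟨hsP, sup_le hx1 hy1⟩ with h | h
      exacts [hxP h.1, hyP h.1]
    refine ⟨hIideal, ?_, ?_⟩
    · intro hEq
      have h1I : (1 : α) ∈ negCone α \ P := by rw [hEq]; exact one_mem_negCone
      exact h1I.2 h1P
    · intro J hJ hJN hIJ
      refine Set.Subset.antisymm ?_ hIJ
      by_contra hcon
      obtain ⟨z, hzJ, hzI⟩ := Set.not_subset.mp hcon
      have hz1 : z ≤ 1 := hJ.2.1 hzJ
      have hzP : z ∈ P := by
        by_contra h
        exact hzI ⟨hz1, h⟩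
      have h1J : (1 : α) ∉ J := fun h =>
        hJN (Set.Subset.antisymm hJ.2.1 fun n hn => hJ.2.2.1 1 h n hn hn)
      obtain ⟨M, hM, h1M, hJM, hmax⟩ := exists_maximal_lat_ideal hJ h1J
      have hGprime : IsPrimeLatFilter (negCone α \ M) := by
        refine ⟨⟨⟨1, one_mem_negCone, h1M⟩, fun x hx => hx.1, ?_, ?_⟩, ?_, ?_⟩
        · rintro x ⟨hx1, hxM⟩ y hy1 hxy
          exact ⟨hy1, fun hyM => hxM (hM.2.2.1 y hyM x hx1 hxy)⟩
        · rintro x ⟨hx1, hxM⟩ y ⟨hy1, hyM⟩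
          refine ⟨inf_le_left.trans hx1, fun hinfM => ?_⟩
          have hxyM : x * y ∉ M := maximal_ideal_mul hM h1M hmax hx1 hy1 hxM hyM
          refine hxyM (hM.2.2.1 _ hinfM _ (mul_le_one'' hx1 hy1) ?_)
          exact le_inf (by simpa using mul_le_mul_left'' hy1 x)
            (by simpa using mul_le_mul_right'' hx1 y)
        · intro hEq
          have hzG : z ∈ negCone α \ M := by rw [hEq]; exact hz1
          exact hzG.2 (hJM hzJ)
        · intro x hx1 y hy1 hxy
          by_contra hcon2
          push_neg at hcon2
          have hxM : x ∈ M := by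
            by_contra h
            exact hcon2.1 ⟨hx1, h⟩
          have hyM : y ∈ M := by
            by_contra h
            exact hcon2.2 ⟨hy1, h⟩
          exact hxy.2 (hM.2.2.2 x hxM y hyM)
      have hGF : negCone α \ M ⊆ P ∩ negCone α := by
        rintro x ⟨hx1, hxM⟩
        refine ⟨?_, hx1⟩
        by_contra hxP
        exact hxM (hJM (hIJ ⟨hx1, hxP⟩))
      have hGeq := hFmin _ hGprime hGF
      have hzG : z ∈ negCone α \ M := by rw [hGeq]; exact ⟨hzP, hz1⟩
      exact hzG.2 (hJM hzJ)
  tfae_have 2 → 1 := by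
    rintro ⟨hI, hIN, hImax⟩
    refine ⟨hP, hP', ?_⟩
    intro Q hQ hQuniv hQP
    by_contra hQne
    have hnPQ : ¬ P ⊆ Q := fun h => hQne (Set.Subset.antisymm hQP h)
    obtain ⟨w, hwP, hwQ⟩ := Set.not_subset.mp hnPQ
    have hz1 : absv w ≤ 1 := absv_le_one w
    have hzP : absv w ∈ P := absv_mem hP.1 hwP
    have hzQ : absv w ∉ Q := fun h => hwQ (mem_of_absv_mem hec hQ.1 h)
    obtain ⟨i₀, hi₀⟩ := hI.1
    have hJideal : IsLatIdeal {y : α | y ≤ 1 ∧ ∃ i ∈ negCone α \ P, y ≤ i ⊔ absv w} := by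
      refine ⟨⟨i₀, hI.2.1 hi₀, i₀, hi₀, le_sup_left⟩, fun x hx => hx.1, ?_, ?_⟩
      · rintro x ⟨hx1, i, hi, hxi⟩ y hy1 hyx
        exact ⟨hy1, i, hi, hyx.trans hxi⟩
      · rintro x ⟨hx1, i, hi, hxi⟩ y ⟨hy1, k, hk, hyk⟩
        exact ⟨sup_le hx1 hy1, i ⊔ k, hI.2.2.2 i hi k hk,
          sup_le (hxi.trans (sup_le_sup_right le_sup_left _))
            (hyk.trans (sup_le_sup_right le_sup_right _))⟩
    have hIJ : negCone α \ P ⊆ {y : α | y ≤ 1 ∧ ∃ i ∈ negCone α \ P, y ≤ i ⊔ absv w} :=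
      fun i hi => ⟨hi.1, i, hi, le_sup_left⟩
    have hJne : {y : α | y ≤ 1 ∧ ∃ i ∈ negCone α \ P, y ≤ i ⊔ absv w} ≠ negCone α \ P := by
      intro hEq
      have hzJ : absv w ∈ {y : α | y ≤ 1 ∧ ∃ i ∈ negCone α \ P, y ≤ i ⊔ absv w} :=
        ⟨hz1, i₀, hi₀, le_sup_right⟩
      rw [hEq] at hzJ
      exact hzJ.2 hzP
    have hJN : {y : α | y ≤ 1 ∧ ∃ i ∈ negCone α \ P, y ≤ i ⊔ absv w} = negCone α := by
      by_contra hJN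
      exact hJne (hImax _ hJideal hJN hIJ)
    have h1J : (1 : α) ∈ {y : α | y ≤ 1 ∧ ∃ i ∈ negCone α \ P, y ≤ i ⊔ absv w} := by
      rw [hJN]; exact one_mem_negCone
    obtain ⟨-, i, ⟨hi1, hiP⟩, h1i⟩ := h1J
    have hiQ : i ∉ Q := fun h => hiP (hQP h)
    have hsub : Cgen i ∩ Cgen (absv w) ⊆ Q := by
      rintro x ⟨⟨m, hm⟩, ⟨n, hn⟩⟩
      have h1x : (1 : α) ≤ absv x :=
        calc (1 : α) ≤ (i ⊔ absv w) ^ (m + n) := one_le_pow'' h1i (m + n)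
          _ ≤ i ^ m ⊔ (absv w) ^ n := sup_pow_le hi1 hz1 m n
          _ ≤ absv x := sup_le hm hn
      have hax : absv x = 1 := le_antisymm (absv_le_one x) h1x
      exact mem_of_absv_mem hec hQ.1 (by rw [hax]; exact hQ.1.one_mem)
    rcases hQ.2 _ _ (Cgen_convex hec hi1) (Cgen_convex hec hz1) hsub with h | h
    · exact hiQ (h (self_mem_Cgen hi1))
    · exact hzQ (h (self_mem_Cgen hz1))
  tfae_finish
end

section
/- Let L be an e-cyclic residuated lattice and let (H_i)_{i ∈ I} be a family of normal convex subalgebras of L. Then C[⋃_{i ∈ I} H_i], the join of the H_i in the lattice of convex subalgebras of L, is a normal convex subalgebra of L. (Hence the lattice of normal convex subalgebras is a complete sublattice of the lattice of convex subalgebras.) -/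
universe u

open ResiduatedLattice

/-- A convex subalgebra is normal if it is closed under conjugation. -/
def IsNormal {α : Type u} [ResiduatedLattice α] (H : Set α) : Prop :=
  ∀ x ∈ H, ∀ y : α, ldiv y (x * y) ⊓ 1 ∈ H ∧ rdiv (y * x) y ⊓ 1 ∈ H

namespace Stmt16Aux

variable {α : Type u} [ResiduatedLattice α]

lemma le_ldiv' {x y z : α} : x * y ≤ z ↔ y ≤ ldiv x z := mul_le_iff_le_ldiv x y z
lemma le_rdiv' {x y z : α} : x * y ≤ z ↔ x ≤ rdiv z y := mul_le_iff_le_rdiv x y z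

lemma mul_ldiv_le (x z : α) : x * ldiv x z ≤ z := le_ldiv'.mpr le_rfl
lemma rdiv_mul_le (z y : α) : rdiv z y * y ≤ z := le_rdiv'.mpr le_rfl

lemma rl_mulr {a b : α} (h : a ≤ b) (c : α) : a * c ≤ b * c :=
  le_rdiv'.mpr (h.trans (le_rdiv'.mp le_rfl))
lemma rl_mull {a b : α} (h : a ≤ b) (c : α) : c * a ≤ c * b :=
  le_ldiv'.mpr (h.trans (le_ldiv'.mp le_rfl))
lemma rl_mul_le_mul {a b c d : α} (h1 : a ≤ b) (h2 : c ≤ d) : a * c ≤ b * d :=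
  (rl_mulr h1 c).trans (rl_mull h2 b)
lemma rl_mul_le_one {a b : α} (ha : a ≤ 1) (hb : b ≤ 1) : a * b ≤ 1 :=
  (rl_mul_le_mul ha hb).trans (le_of_eq (one_mul 1))
lemma rl_mul_le_left {a b : α} (ha : a ≤ 1) : a * b ≤ b :=
  (rl_mulr ha b).trans (le_of_eq (one_mul b))
lemma rl_mul_le_right {a b : α} (hb : b ≤ 1) : a * b ≤ a :=
  (rl_mull hb a).trans (le_of_eq (mul_one a))

lemma ldiv_mono {y z z' : α} (h : z ≤ z') : ldiv y z ≤ ldiv y z' :=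
  le_ldiv'.mp ((mul_ldiv_le y z).trans h)
lemma rdiv_mono {y z z' : α} (h : z ≤ z') : rdiv z y ≤ rdiv z' y :=
  le_rdiv'.mp ((rdiv_mul_le z y).trans h)

lemma absv_le_self (x : α) : absv x ≤ x := inf_le_left.trans inf_le_left
lemma absv_le_one (x : α) : absv x ≤ 1 := inf_le_right
lemma absv_le_rdiv (x : α) : absv x ≤ rdiv 1 x := inf_le_left.trans inf_le_right
lemma le_absv {w x : α} (h1 : w ≤ x) (h2 : w * x ≤ 1) (h3 : w ≤ 1) : w ≤ absv x :=
  le_inf (le_inf h1 (le_rdiv'.mp h2)) h3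

lemma absv_facts {u x : α} (h : u ≤ absv x) : u ≤ x ∧ u * x ≤ 1 ∧ u ≤ 1 :=
  ⟨h.trans (absv_le_self x), le_rdiv'.mpr (h.trans (absv_le_rdiv x)),
    h.trans (absv_le_one x)⟩

lemma absv_fact_ec (hec : ECyclic α) {u x : α} (h : u ≤ absv x) : x * u ≤ 1 :=
  le_ldiv'.mpr ((h.trans (absv_le_rdiv x)).trans (le_of_eq (hec x).symm))

lemma absv_mem {K : Set α} (hK : IsConvexSubalgebra K) {x : α} (hx : x ∈ K) :
    absv x ∈ K :=
  hK.inf_mem (hK.inf_mem hx (hK.rdiv_mem hK.one_mem hx)) hK.one_mem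

lemma mem_of_absv_mem {K : Set α} (hK : IsConvexSubalgebra K) {x : α}
    (hx : absv x ∈ K) : x ∈ K :=
  hK.convex hx (hK.ldiv_mem hx hK.one_mem) (absv_le_self x)
    (le_ldiv'.mp (le_rdiv'.mpr (absv_le_rdiv x)))

variable {ι : Type*}

/-- Lists of negative elements coming from the family. -/
def Good (H : ι → Set α) (l : List α) : Prop := ∀ h ∈ l, h ≤ 1 ∧ ∃ i, h ∈ H i

/-- Candidate for the join. -/
def DSet (H : ι → Set α) : Set α := {x | ∃ l : List α, Good H l ∧ l.prod ≤ absv x}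

lemma good_append {H : ι → Set α} {l₁ l₂ : List α} (h1 : Good H l₁) (h2 : Good H l₂) :
    Good H (l₁ ++ l₂) := fun a ha => (List.mem_append.mp ha).elim (h1 a) (h2 a)

lemma good_prod_le_one {H : ι → Set α} {l : List α} (hl : Good H l) : l.prod ≤ 1 := by
  induction l with
  | nil => simp
  | cons h t ih =>
    rw [List.prod_cons]
    exact rl_mul_le_one (hl h (List.mem_cons_self)).1
      (ih fun a ha => hl a (List.mem_cons_of_mem h ha))

lemma good_prod_mem {H : ι → Set α} {K : Set α} (hK : IsConvexSubalgebra K)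
    (hsub : ∀ i, H i ⊆ K) {l : List α} (hl : Good H l) : l.prod ∈ K := by
  induction l with
  | nil => simpa using hK.one_mem
  | cons h t ih =>
    rw [List.prod_cons]
    obtain ⟨-, i, hi⟩ := hl h (List.mem_cons_self)
    exact hK.mul_mem (hsub i hi) (ih fun a ha => hl a (List.mem_cons_of_mem h ha))

lemma w_le_uv {u v : α} (hu : u ≤ 1) (hv : v ≤ 1) : u * v * v * u ≤ u * v :=
  (rl_mul_le_right hu).trans (rl_mul_le_right hv)

lemma w_le_vu {u v : α} (hu : u ≤ 1) (hv : v ≤ 1) : u * v * v * u ≤ v * u := by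
  have h1 : u * v * v * u = u * (v * v * u) := by
    rw [mul_assoc u v v, mul_assoc u (v*v) u]
  rw [h1]
  exact (rl_mul_le_left hu).trans (rl_mulr (rl_mul_le_right hv) u)

section OpBounds

variable (hec : ECyclic α) {u v x y : α} (hu : u ≤ absv x) (hv : v ≤ absv y)

include hu hv

lemma w_le_absv_mul : u * v * v * u ≤ absv (x * y) := by
  obtain ⟨hux, hux1, hu1⟩ := absv_facts hu
  obtain ⟨hvy, hvy1, hv1⟩ := absv_facts hv
  refine le_absv ?_ ?_ (rl_mul_le_one (rl_mul_le_one (rl_mul_le_one hu1 hv1) hv1) hu1)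
  · exact (w_le_uv hu1 hv1).trans (rl_mul_le_mul hux hvy)
  · refine (rl_mulr (w_le_vu hu1 hv1) (x*y)).trans ?_
    have : u * (x * y) ≤ y := by
      rw [← mul_assoc]; exact rl_mul_le_left hux1
    calc v * u * (x * y) = v * (u * (x * y)) := mul_assoc ..
      _ ≤ v * y := rl_mull this v
      _ ≤ 1 := hvy1

lemma w_le_absv_sup : u * v * v * u ≤ absv (x ⊔ y) := by
  obtain ⟨hux, hux1, hu1⟩ := absv_facts hu
  obtain ⟨hvy, hvy1, hv1⟩ := absv_facts hv
  set w := u * v * v * u with hw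
  have hw1 : w ≤ 1 := rl_mul_le_one (rl_mul_le_one (rl_mul_le_one hu1 hv1) hv1) hu1
  refine le_absv (((w_le_uv hu1 hv1).trans (rl_mul_le_right hv1)).trans
    (hux.trans le_sup_left)) ?_ hw1
  have hx1 : w * x ≤ 1 := by
    calc w * x ≤ v * u * x := rl_mulr (w_le_vu hu1 hv1) x
      _ = v * (u * x) := mul_assoc ..
      _ ≤ v * 1 := rl_mull hux1 v
      _ ≤ 1 := (mul_one v).le.trans hv1
  have hy1 : w * y ≤ 1 := by
    calc w * y ≤ u * v * y := rl_mulr (w_le_uv hu1 hv1) y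
      _ = u * (v * y) := mul_assoc ..
      _ ≤ u * 1 := rl_mull hvy1 u
      _ ≤ 1 := (mul_one u).le.trans hu1
  have : x ⊔ y ≤ ldiv w 1 := sup_le (le_ldiv'.mp hx1) (le_ldiv'.mp hy1)
  exact le_ldiv'.mpr this

lemma w_le_absv_inf : u * v * v * u ≤ absv (x ⊓ y) := by
  obtain ⟨hux, hux1, hu1⟩ := absv_facts hu
  obtain ⟨hvy, hvy1, hv1⟩ := absv_facts hv
  have hw1 : u*v*v*u ≤ 1 := rl_mul_le_one (rl_mul_le_one (rl_mul_le_one hu1 hv1) hv1) hu1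
  refine le_absv (le_inf ?_ ?_) ?_ hw1
  · exact ((w_le_uv hu1 hv1).trans (rl_mul_le_right hv1)).trans hux
  · exact ((w_le_uv hu1 hv1).trans (rl_mul_le_left hu1)).trans hvy
  · calc u*v*v*u * (x ⊓ y) ≤ v * u * (x ⊓ y) := rl_mulr (w_le_vu hu1 hv1) _
      _ = v * (u * (x ⊓ y)) := mul_assoc ..
      _ ≤ v * (u * x) := rl_mull (rl_mull inf_le_left u) v
      _ ≤ v * 1 := rl_mull hux1 v
      _ ≤ 1 := (mul_one v).le.trans hv1

include hec

lemma w_le_absv_ldiv : u * v * v * u ≤ absv (ldiv x y) := by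
  obtain ⟨hux, hux1, hu1⟩ := absv_facts hu
  obtain ⟨hvy, hvy1, hv1⟩ := absv_facts hv
  have hxu1 : x * u ≤ 1 := absv_fact_ec hec hu
  have hw1 : u*v*v*u ≤ 1 := rl_mul_le_one (rl_mul_le_one (rl_mul_le_one hu1 hv1) hv1) hu1
  refine le_absv ?_ ?_ hw1
  · refine (w_le_uv hu1 hv1).trans (le_ldiv'.mp ?_)
    calc x * (u * v) = x * u * v := (mul_assoc ..).symm
      _ ≤ 1 * v := rl_mulr hxu1 v
      _ = v := one_mul v
      _ ≤ y := hvy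
  · calc u*v*v*u * ldiv x y ≤ v * u * ldiv x y := rl_mulr (w_le_vu hu1 hv1) _
      _ = v * (u * ldiv x y) := mul_assoc ..
      _ ≤ v * (x * ldiv x y) := rl_mull (rl_mulr hux _) v
      _ ≤ v * y := rl_mull (mul_ldiv_le x y) v
      _ ≤ 1 := hvy1

lemma w_le_absv_rdiv : u * v * v * u ≤ absv (rdiv x y) := by
  obtain ⟨hux, hux1, hu1⟩ := absv_facts hu
  obtain ⟨hvy, hvy1, hv1⟩ := absv_facts hv
  have hxu1 : x * u ≤ 1 := absv_fact_ec hec hu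
  have hw1 : u*v*v*u ≤ 1 := rl_mul_le_one (rl_mul_le_one (rl_mul_le_one hu1 hv1) hv1) hu1
  refine le_inf (le_inf ?_ ?_) hw1
  · refine (w_le_uv hu1 hv1).trans (le_rdiv'.mp ?_)
    calc u * v * y = u * (v * y) := mul_assoc ..
      _ ≤ u * 1 := rl_mull hvy1 u
      _ = u := mul_one u
      _ ≤ x := hux
  · refine (w_le_vu hu1 hv1).trans ?_
    have h1 : rdiv x y * (v * u) ≤ 1 := by
      calc rdiv x y * (v * u) = rdiv x y * v * u := (mul_assoc ..).symm
        _ ≤ rdiv x y * y * u := rl_mulr (rl_mull hvy _) u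
        _ ≤ x * u := rl_mulr (rdiv_mul_le x y) u
        _ ≤ 1 := hxu1
    have := le_ldiv'.mp h1
    rwa [hec (rdiv x y)] at this

lemma w_le_absv_convex {z : α} (hxz : x ≤ z) (hzy : z ≤ y) :
    u * v * v * u ≤ absv z := by
  obtain ⟨hux, hux1, hu1⟩ := absv_facts hu
  obtain ⟨hvy, hvy1, hv1⟩ := absv_facts hv
  have hw1 : u*v*v*u ≤ 1 := rl_mul_le_one (rl_mul_le_one (rl_mul_le_one hu1 hv1) hv1) hu1
  refine le_absv (((w_le_uv hu1 hv1).trans (rl_mul_le_right hv1)).trans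
    (hux.trans hxz)) ?_ hw1
  have hvz1 : v * z ≤ 1 := by
    have hyv : v ≤ rdiv 1 y := hv.trans (absv_le_rdiv y)
    have : v * y ≤ 1 := le_rdiv'.mpr hyv
    exact (rl_mull hzy v).trans this
  calc u*v*v*u * z ≤ u * v * z := rl_mulr (w_le_uv hu1 hv1) z
    _ = u * (v * z) := mul_assoc ..
    _ ≤ u * 1 := rl_mull hvz1 u
    _ = u := mul_one u
    _ ≤ 1 := hu1

end OpBounds

lemma dset_pair {H : ι → Set α} {x y : α} {l₁ l₂ : List α}
    (hg1 : Good H l₁) (hg2 : Good H l₂)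
    (hgoal : ∀ t : α, l₁.prod * l₂.prod * l₂.prod * l₁.prod ≤ absv t → t ∈ DSet H)
    (t : α) (h : l₁.prod * l₂.prod * l₂.prod * l₁.prod ≤ absv t) : t ∈ DSet H :=
  hgoal t h

lemma prod_w {l₁ l₂ : List α} :
    (l₁ ++ l₂ ++ l₂ ++ l₁).prod = l₁.prod * l₂.prod * l₂.prod * l₁.prod := by
  simp [List.prod_append, mul_assoc]

lemma dset_isConvex (hec : ECyclic α) (H : ι → Set α) :
    IsConvexSubalgebra (DSet H) := by
  have one_mem : (1:α) ∈ DSet H := by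
    refine ⟨[], fun h hh => absurd hh List.not_mem_nil, ?_⟩
    rw [List.prod_nil]
    exact le_absv le_rfl (le_of_eq (one_mul 1)) le_rfl
  have mk : ∀ {x y : α}, x ∈ DSet H → y ∈ DSet H →
      ∀ t : α, (∀ u v : α, u ≤ absv x → v ≤ absv y → u * v * v * u ≤ absv t) →
      t ∈ DSet H := by
    intro x y hx hy t ht
    obtain ⟨l₁, hg1, hle1⟩ := hx
    obtain ⟨l₂, hg2, hle2⟩ := hy
    exact ⟨l₁ ++ l₂ ++ l₂ ++ l₁,
      good_append (good_append (good_append hg1 hg2) hg2) hg1,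
      by rw [prod_w]; exact ht _ _ hle1 hle2⟩
  refine ⟨one_mem, ?_, ?_, ?_, ?_, ?_, ?_⟩
  · intro x hx y hy
    exact mk hx hy (x*y) fun u v hu hv => w_le_absv_mul hu hv
  · intro x hx y hy
    exact mk hx hy (x ⊔ y) fun u v hu hv => w_le_absv_sup hu hv
  · intro x hx y hy
    exact mk hx hy (x ⊓ y) fun u v hu hv => w_le_absv_inf hu hv
  · intro x hx y hy
    exact mk hx hy (ldiv x y) fun u v hu hv => w_le_absv_ldiv hec hu hv
  · intro x hx y hy
    exact mk hx hy (rdiv x y) fun u v hu hv => w_le_absv_rdiv hec hu hv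
  · intro a ha b hb z haz hzb
    exact mk ha hb z fun u v hu hv => w_le_absv_convex hec hu hv haz hzb

lemma union_subset_dset {H : ι → Set α} (hH : ∀ i, IsConvexSubalgebra (H i)) :
    (⋃ i, H i) ⊆ DSet H := by
  rintro h hh
  obtain ⟨i, hi⟩ := Set.mem_iUnion.mp hh
  refine ⟨[absv h], ?_, ?_⟩
  · intro a ha
    rw [List.mem_singleton] at ha
    subst ha
    exact ⟨absv_le_one h, i, absv_mem (hH i) hi⟩
  · rw [List.prod_singleton]

lemma dset_min {H : ι → Set α} {K : Set α} (hK : IsConvexSubalgebra K)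
    (hsub : (⋃ i, H i) ⊆ K) : DSet H ⊆ K := by
  rintro x ⟨l, hg, hle⟩
  have hprod : l.prod ∈ K :=
    good_prod_mem hK (fun i => (Set.subset_iUnion H i).trans hsub) hg
  have habs : absv x ∈ K :=
    hK.convex hprod hK.one_mem hle (absv_le_one x)
  exact mem_of_absv_mem hK habs

lemma lconj_mul_le (y a b : α) :
    (ldiv y (a*y) ⊓ 1) * (ldiv y (b*y) ⊓ 1) ≤ ldiv y (a*b*y) ⊓ 1 := by
  refine le_inf (le_ldiv'.mp ?_) (rl_mul_le_one inf_le_right inf_le_right)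
  calc y * ((ldiv y (a*y) ⊓ 1) * (ldiv y (b*y) ⊓ 1))
      = y * (ldiv y (a*y) ⊓ 1) * (ldiv y (b*y) ⊓ 1) := (mul_assoc ..).symm
    _ ≤ y * ldiv y (a*y) * (ldiv y (b*y) ⊓ 1) := rl_mulr (rl_mull inf_le_left y) _
    _ ≤ (a*y) * (ldiv y (b*y) ⊓ 1) := rl_mulr (mul_ldiv_le y _) _
    _ = a * (y * (ldiv y (b*y) ⊓ 1)) := mul_assoc ..
    _ ≤ a * (y * ldiv y (b*y)) := rl_mull (rl_mull inf_le_left y) a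
    _ ≤ a * (b*y) := rl_mull (mul_ldiv_le y _) a
    _ = a*b*y := (mul_assoc ..).symm

lemma rconj_mul_le (y a b : α) :
    (rdiv (y*a) y ⊓ 1) * (rdiv (y*b) y ⊓ 1) ≤ rdiv (y*(a*b)) y ⊓ 1 := by
  refine le_inf (le_rdiv'.mp ?_) (rl_mul_le_one inf_le_right inf_le_right)
  calc (rdiv (y*a) y ⊓ 1) * (rdiv (y*b) y ⊓ 1) * y
      = (rdiv (y*a) y ⊓ 1) * ((rdiv (y*b) y ⊓ 1) * y) := mul_assoc ..
    _ ≤ (rdiv (y*a) y ⊓ 1) * (rdiv (y*b) y * y) := rl_mull (rl_mulr inf_le_left y) _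
    _ ≤ (rdiv (y*a) y ⊓ 1) * (y*b) := rl_mull (rdiv_mul_le _ y) _
    _ = (rdiv (y*a) y ⊓ 1) * y * b := (mul_assoc ..).symm
    _ ≤ rdiv (y*a) y * y * b := rl_mulr (rl_mulr inf_le_left y) b
    _ ≤ (y*a) * b := rl_mulr (rdiv_mul_le _ y) b
    _ = y*(a*b) := mul_assoc ..

lemma lconj_mono {a b : α} (y : α) (h : a ≤ b) :
    ldiv y (a*y) ⊓ 1 ≤ ldiv y (b*y) ⊓ 1 :=
  inf_le_inf (ldiv_mono (rl_mulr h y)) le_rfl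

lemma rconj_mono {a b : α} (y : α) (h : a ≤ b) :
    rdiv (y*a) y ⊓ 1 ≤ rdiv (y*b) y ⊓ 1 :=
  inf_le_inf (rdiv_mono (rl_mull h y)) le_rfl

lemma lconj_prod_le (y : α) (l : List α) :
    (l.map (fun h => ldiv y (h*y) ⊓ 1)).prod ≤ ldiv y (l.prod * y) ⊓ 1 := by
  induction l with
  | nil =>
    rw [List.map_nil, List.prod_nil]
    refine le_inf (le_ldiv'.mp ?_) le_rfl
    rw [mul_one, one_mul]
  | cons h t ih =>
    rw [List.map_cons, List.prod_cons, List.prod_cons]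
    exact (rl_mull ih _).trans (lconj_mul_le y h t.prod)

lemma rconj_prod_le (y : α) (l : List α) :
    (l.map (fun h => rdiv (y*h) y ⊓ 1)).prod ≤ rdiv (y * l.prod) y ⊓ 1 := by
  induction l with
  | nil =>
    rw [List.map_nil, List.prod_nil]
    refine le_inf (le_rdiv'.mp ?_) le_rfl
    rw [mul_one, one_mul]
  | cons h t ih =>
    rw [List.map_cons, List.prod_cons, List.prod_cons]
    exact (rl_mull ih _).trans (rconj_mul_le y h t.prod)

lemma dset_normal (H : ι → Set α) (hN : ∀ i, IsNormal (H i)) :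
    IsNormal (DSet H) := by
  rintro x ⟨l, hg, hle⟩ y
  have hlx : l.prod ≤ x := hle.trans (absv_le_self x)
  constructor
  · refine ⟨l.map (fun h => ldiv y (h*y) ⊓ 1), ?_, ?_⟩
    · intro a ha
      obtain ⟨h, hh, rfl⟩ := List.mem_map.mp ha
      obtain ⟨-, i, hi⟩ := hg h hh
      exact ⟨inf_le_right, i, ((hN i) h hi y).1⟩
    · have h1 : (l.map (fun h => ldiv y (h*y) ⊓ 1)).prod ≤ ldiv y (x*y) ⊓ 1 :=
        (lconj_prod_le y l).trans (lconj_mono y hlx)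
      have hp1 : (l.map (fun h => ldiv y (h*y) ⊓ 1)).prod ≤ 1 :=
        h1.trans inf_le_right
      exact le_absv h1 (rl_mul_le_one hp1 inf_le_right) hp1
  · refine ⟨l.map (fun h => rdiv (y*h) y ⊓ 1), ?_, ?_⟩
    · intro a ha
      obtain ⟨h, hh, rfl⟩ := List.mem_map.mp ha
      obtain ⟨-, i, hi⟩ := hg h hh
      exact ⟨inf_le_right, i, ((hN i) h hi y).2⟩
    · have h1 : (l.map (fun h => rdiv (y*h) y ⊓ 1)).prod ≤ rdiv (y*x) y ⊓ 1 :=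
        (rconj_prod_le y l).trans (rconj_mono y hlx)
      have hp1 : (l.map (fun h => rdiv (y*h) y ⊓ 1)).prod ≤ 1 :=
        h1.trans inf_le_right
      exact le_absv h1 (rl_mul_le_one hp1 inf_le_right) hp1

end Stmt16Aux


/-- the join of a family of normal convex subalgebras in the lattice of
convex subalgebras is a normal convex subalgebra. -/
theorem stmt16 {α : Type u} [ResiduatedLattice α] {ι : Type*} (hec : ECyclic α)
    (H : ι → Set α) (hH : ∀ i, IsConvexSubalgebra (H i)) (hN : ∀ i, IsNormal (H i)) :
    IsConvexSubalgebra (convexClosure (⋃ i, H i)) ∧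
    IsNormal (convexClosure (⋃ i, H i)) := by
  have hconv := Stmt16Aux.dset_isConvex hec H
  have hnorm := Stmt16Aux.dset_normal H hN
  have heq : convexClosure (⋃ i, H i) = Stmt16Aux.DSet H := by
    apply subset_antisymm
    · exact Set.sInter_subset_of_mem ⟨hconv, Stmt16Aux.union_subset_dset hH⟩
    · intro x hx
      exact Set.mem_sInter.mpr fun K hK => Stmt16Aux.dset_min hK.1 hK.2 hx
  rw [heq]
  exact ⟨hconv, hnorm⟩
end

section
/- Let L be a residuated lattice and let H be a convex subalgebra of L. Then H is normal if and only if for all x ∈ H and u ∈ L, both ((x\u)\u) ∧ e ∈ H and (u/(u/x)) ∧ e ∈ H. -/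
universe u

open ResiduatedLattice

section Aux

variable {α : Type u} [ResiduatedLattice α]

lemma aux_mul_ldiv_le (x z : α) : x * ldiv x z ≤ z :=
  (mul_le_iff_le_ldiv x (ldiv x z) z).mpr le_rfl

lemma aux_rdiv_mul_le (z y : α) : rdiv z y * y ≤ z :=
  (mul_le_iff_le_rdiv (rdiv z y) y z).mpr le_rfl

lemma aux_mul_le_mul_left {a b : α} (h : a ≤ b) (c : α) : c * a ≤ c * b :=
  (mul_le_iff_le_ldiv c a (c * b)).mpr
    (h.trans ((mul_le_iff_le_ldiv c b (c * b)).mp le_rfl))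

lemma aux_mul_le_mul_right {a b : α} (h : a ≤ b) (c : α) : a * c ≤ b * c :=
  (mul_le_iff_le_rdiv a c (b * c)).mpr
    (h.trans ((mul_le_iff_le_rdiv b c (b * c)).mp le_rfl))

end Aux

/-- a convex subalgebra is normal iff it is closed under the
`*`-conjugations `λ*_u(x) = ((x\u)\u) ⊓ e` and `ρ*_u(x) = (u/(u/x)) ⊓ e`. -/
theorem stmt17 {α : Type u} [ResiduatedLattice α]
    (H : Set α) (hH : IsConvexSubalgebra H) :
    IsNormal H ↔
      ∀ x ∈ H, ∀ u : α, ldiv (ldiv x u) u ⊓ 1 ∈ H ∧ rdiv u (rdiv u x) ⊓ 1 ∈ H := by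
  constructor
  · intro hN x hx u
    have hx' : x ⊓ 1 ∈ H := hH.inf_mem hx hH.one_mem
    constructor
    · obtain ⟨h1, -⟩ := hN _ hx' (ldiv x u)
      refine hH.convex h1 hH.one_mem (le_inf ?_ inf_le_right) inf_le_right
      rw [← mul_le_iff_le_ldiv]
      calc ldiv x u * (ldiv (ldiv x u) ((x ⊓ 1) * ldiv x u) ⊓ 1)
          ≤ ldiv x u * ldiv (ldiv x u) ((x ⊓ 1) * ldiv x u) :=
            aux_mul_le_mul_left inf_le_left _
        _ ≤ (x ⊓ 1) * ldiv x u := aux_mul_ldiv_le _ _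
        _ ≤ x * ldiv x u := aux_mul_le_mul_right inf_le_left _
        _ ≤ u := aux_mul_ldiv_le _ _
    · obtain ⟨-, h2⟩ := hN _ hx' (rdiv u x)
      refine hH.convex h2 hH.one_mem (le_inf ?_ inf_le_right) inf_le_right
      rw [← mul_le_iff_le_rdiv]
      calc (rdiv (rdiv u x * (x ⊓ 1)) (rdiv u x) ⊓ 1) * rdiv u x
          ≤ rdiv (rdiv u x * (x ⊓ 1)) (rdiv u x) * rdiv u x :=
            aux_mul_le_mul_right inf_le_left _
        _ ≤ rdiv u x * (x ⊓ 1) := aux_rdiv_mul_le _ _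
        _ ≤ rdiv u x * x := aux_mul_le_mul_left inf_le_left _
        _ ≤ u := aux_rdiv_mul_le _ _
  · intro hC x hx y
    have hx' : x ⊓ 1 ∈ H := hH.inf_mem hx hH.one_mem
    constructor
    · obtain ⟨h1, -⟩ := hC _ hx' (x * y)
      refine hH.convex h1 hH.one_mem (le_inf ?_ inf_le_right) inf_le_right
      rw [← mul_le_iff_le_ldiv]
      have hy : y ≤ ldiv (x ⊓ 1) (x * y) :=
        (mul_le_iff_le_ldiv _ _ _).mp (aux_mul_le_mul_right inf_le_left y)
      calc y * (ldiv (ldiv (x ⊓ 1) (x * y)) (x * y) ⊓ 1)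
          ≤ ldiv (x ⊓ 1) (x * y) * (ldiv (ldiv (x ⊓ 1) (x * y)) (x * y) ⊓ 1) :=
            aux_mul_le_mul_right hy _
        _ ≤ ldiv (x ⊓ 1) (x * y) * ldiv (ldiv (x ⊓ 1) (x * y)) (x * y) :=
            aux_mul_le_mul_left inf_le_left _
        _ ≤ x * y := aux_mul_ldiv_le _ _
    · obtain ⟨-, h2⟩ := hC _ hx' (y * x)
      refine hH.convex h2 hH.one_mem (le_inf ?_ inf_le_right) inf_le_right
      rw [← mul_le_iff_le_rdiv]
      have hy : y ≤ rdiv (y * x) (x ⊓ 1) :=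
        (mul_le_iff_le_rdiv _ _ _).mp (aux_mul_le_mul_left inf_le_left y)
      calc (rdiv (y * x) (rdiv (y * x) (x ⊓ 1)) ⊓ 1) * y
          ≤ (rdiv (y * x) (rdiv (y * x) (x ⊓ 1)) ⊓ 1) * rdiv (y * x) (x ⊓ 1) :=
            aux_mul_le_mul_left hy _
        _ ≤ rdiv (y * x) (rdiv (y * x) (x ⊓ 1)) * rdiv (y * x) (x ⊓ 1) :=
            aux_mul_le_mul_right inf_le_left _
        _ ≤ y * x := aux_rdiv_mul_le _ _
end
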